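/- Let σ(x) = σ₀x² + σ₁x + σ₂, τ(x) = τ₀x + τ₁, λ(n) = nτ₀ + n(n-1)σ₀. Set φ₁(n) = τ₀ + (n-1)σ₀, and assume 2φ₁(n) + 2σ₀ - τ₀ ≠ 0. Define ψ₁(n) = [φ₁(n)(τ₁ + τ₀ - σ₀ - φ₁(n)) + λ(n)σ₀ + λ(n)σ₁ + (1/2)λ(n)τ₀]/(2φ₁(n) + 2σ₀ - τ₀) and μ₁(n) = ψ₁(n)(ψ₁(n) + φ₁(n) + σ₁ + σ₀ - τ₁) - (1/2)λ(n)(σ₀ + σ₁ + 2σ₂ + τ₁) - φ₁(n)(σ₂ + τ₁ + (1/2)λ(n)) - (1/4)λ(n)². Then φ(x) = φ₁(n)x + ψ₁(n) satisfies the discrete Riccati equation (λ(n)/2)(σ(x+1) + σ(x) + τ(x)) + λ(n)²/4 + μ₁(n) + (σ(x)+τ(x))φ(x+1) - σ(x+1)φ(x) + (λ(n)/2)(φ(x+1) - φ(x)) - φ(x)φ(x+1) = 0 for all x. -/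

import Mathlib

/-- The first polynomial solution φ(x) = φ₁(n)x + ψ₁(n) of the
discrete Riccati equation, with φ₁(n) = τ₀ + (n-1)σ₀ and ψ₁, μ₁ as given. -/
theorem stmt5 (σ₀ σ₁ σ₂ τ₀ τ₁ : ℂ) (n : ℤ)
    (lam φ₁ ψ₁ μ₁ : ℂ)
    (hlam : lam = (n : ℂ) * τ₀ + (n : ℂ) * ((n : ℂ) - 1) * σ₀)
    (hφ : φ₁ = τ₀ + ((n : ℂ) - 1) * σ₀)
    (hne : 2 * φ₁ + 2 * σ₀ - τ₀ ≠ 0)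
    (hψ : ψ₁ = (φ₁ * (τ₁ + τ₀ - σ₀ - φ₁) + lam * σ₀ + lam * σ₁
        + (1 / 2) * lam * τ₀) / (2 * φ₁ + 2 * σ₀ - τ₀))
    (hμ : μ₁ = ψ₁ * (ψ₁ + φ₁ + σ₁ + σ₀ - τ₁)
        - (1 / 2) * lam * (σ₀ + σ₁ + 2 * σ₂ + τ₁)
        - φ₁ * (σ₂ + τ₁ + (1 / 2) * lam) - (1 / 4) * lam ^ 2) :
    ∀ x : ℂ,
      (lam / 2) * ((σ₀ * (x + 1) ^ 2 + σ₁ * (x + 1) + σ₂)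
          + (σ₀ * x ^ 2 + σ₁ * x + σ₂) + (τ₀ * x + τ₁))
        + lam ^ 2 / 4 + μ₁
        + ((σ₀ * x ^ 2 + σ₁ * x + σ₂) + (τ₀ * x + τ₁)) * (φ₁ * (x + 1) + ψ₁)
        - (σ₀ * (x + 1) ^ 2 + σ₁ * (x + 1) + σ₂) * (φ₁ * x + ψ₁)
        + (lam / 2) * ((φ₁ * (x + 1) + ψ₁) - (φ₁ * x + ψ₁))
        - (φ₁ * x + ψ₁) * (φ₁ * (x + 1) + ψ₁) = 0 := by
  intro x
  have hψ' : ψ₁ * (2 * φ₁ + 2 * σ₀ - τ₀) = φ₁ * (τ₁ + τ₀ - σ₀ - φ₁) + lam * σ₀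
      + lam * σ₁ + (1 / 2) * lam * τ₀ := by
    rw [hψ, div_mul_cancel₀ _ hne]
  subst hμ hφ hlam
  linear_combination (-x) * hψ'
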